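/- No gonosomal algebra is associative: for any gonosomal algebra A of type (n,ν) over K, it is not the case that x(yz) = (xy)z for all x, y, z ∈ A. -/

import Mathlib

/-- No gonosomal algebra is associative. -/
theorem gonosomal_not_associative
    {K : Type*} [Field K] (hchar : ringChar K ≠ 2)
    {n ν : ℕ} (hn : 1 ≤ n) (hν : 1 ≤ ν)
    {A : Type*} [AddCommGroup A] [Module K A]
    (mul : A →ₗ[K] A →ₗ[K] A)
    (b : Module.Basis (Fin n ⊕ Fin ν) K A)
    (γ : Fin n → Fin ν → Fin n → K) (γt : Fin n → Fin ν → Fin ν → K)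
    (hee : ∀ i j : Fin n, mul (b (Sum.inl i)) (b (Sum.inl j)) = 0)
    (hff : ∀ p q : Fin ν, mul (b (Sum.inr p)) (b (Sum.inr q)) = 0)
    (hef : ∀ (i : Fin n) (p : Fin ν),
      mul (b (Sum.inl i)) (b (Sum.inr p)) =
        (∑ k, γ i p k • b (Sum.inl k)) + (∑ r, γt i p r • b (Sum.inr r)))
    (hfe : ∀ (i : Fin n) (p : Fin ν),
      mul (b (Sum.inr p)) (b (Sum.inl i)) = mul (b (Sum.inl i)) (b (Sum.inr p)))
    (hsum : ∀ (i : Fin n) (p : Fin ν),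
      (∑ k, γ i p k) + (∑ r, γt i p r) = 1) :
    ¬ (∀ x y z : A, mul x (mul y z) = mul (mul x y) z) := by
  intro h
  have i0 : Fin n := ⟨0, hn⟩
  have p0 : Fin ν := ⟨0, hν⟩
  set ω : A →ₗ[K] K := b.sumCoords with hω
  have hωb : ∀ j, ω (b j) = 1 := fun j => b.sumCoords_self_apply j
  have hω1 : ∀ (i : Fin n) (p : Fin ν), ω (mul (b (Sum.inl i)) (b (Sum.inr p))) = 1 := by
    intro i p
    rw [hef]
    simp only [map_add, map_sum, map_smul, hωb, smul_eq_mul, mul_one]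
    exact hsum i p
  set e := b (Sum.inl i0) with he
  set f := b (Sum.inr p0) with hf
  -- From associativity with (e, e, f): ∑ γt = 0
  have h1 : (∑ r, γt i0 p0 r) = 0 := by
    have hassoc := h e e f
    rw [hee i0 i0, map_zero] at hassoc
    have hexp : mul e (mul e f) = ∑ r, γt i0 p0 r • mul e (b (Sum.inr r)) := by
      rw [he, hf, hef]
      simp [map_add, map_sum, map_smul, hee]
    have := congrArg ω (hexp ▸ hassoc)
    simpa [map_sum, map_smul, he, hf, hω1, LinearMap.zero_apply] using this
  -- From associativity with (e, f, f): ∑ γ = 0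
  have h2 : (∑ k, γ i0 p0 k) = 0 := by
    have hassoc := h e f f
    rw [hf, hff p0 p0, map_zero] at hassoc
    have hexp : mul (mul e f) f = ∑ k, γ i0 p0 k • mul (b (Sum.inl k)) f := by
      rw [he, hf, hef]
      simp [map_add, map_sum, map_smul, LinearMap.add_apply, LinearMap.sum_apply,
        LinearMap.smul_apply, hff]
    have := congrArg ω (hexp ▸ hassoc.symm)
    simpa [map_sum, map_smul, he, hf, hω1, LinearMap.zero_apply] using this
  have := hsum i0 p0
  rw [h1, h2, add_zero] at this
  exact zero_ne_one this
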